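/- arXiv:1601.00568 — 2 statements merged into one kernel-verified Lean document; each statement's English description precedes it below -/
import Mathlib

section
/- There is a constant C > 0 such that for all λ > 0, all t ∈ (0, T], and all s > 0, the derivative of s ↦ exp(-λ^s t) satisfies |d/ds exp(-λ^s t)| ≤ C s^{-1} (1 + |ln t|). -/
lemma cube_le_exp {u : ℝ} (hu : 0 ≤ u) : u ^ 3 / 6 ≤ Real.exp u := by
  have h := Real.sum_le_exp_of_nonneg hu 4
  have hnn : ∀ i ∈ Finset.range 4, (0:ℝ) ≤ u ^ i / (Nat.factorial i) := by
    intro i _; positivity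
  calc u ^ 3 / 6 = u ^ 3 / (Nat.factorial 3) := by norm_num [Nat.factorial]
    _ ≤ ∑ i ∈ Finset.range 4, u ^ i / (Nat.factorial i) := by
        apply Finset.single_le_sum hnn; simp
    _ ≤ Real.exp u := h

lemma ue_le_one {u : ℝ} (hu : 0 < u) : u * Real.exp (-u) ≤ 1 := by
  rw [Real.exp_neg]
  rw [mul_inv_le_iff₀ (Real.exp_pos u), one_mul]
  linarith [Real.add_one_le_exp u]

lemma ue_log_le_six {u : ℝ} (hu : 0 < u) : u * Real.exp (-u) * |Real.log u| ≤ 6 := by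
  rcases le_total u 1 with h | h
  · have hlog : Real.log u ≤ 0 := Real.log_nonpos hu.le h
    rw [abs_of_nonpos hlog]
    have h1 : -Real.log u = Real.log u⁻¹ := (Real.log_inv u).symm
    have h2 : Real.log u⁻¹ ≤ u⁻¹ - 1 := Real.log_le_sub_one_of_pos (by positivity)
    have he : Real.exp (-u) ≤ 1 := Real.exp_le_one_iff.mpr (by linarith)
    have : u * (-Real.log u) ≤ 1 := by
      rw [h1]
      calc u * Real.log u⁻¹ ≤ u * (u⁻¹ - 1) := by
            apply mul_le_mul_of_nonneg_left h2 hu.le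
        _ ≤ 1 := by nlinarith [mul_inv_cancel₀ (ne_of_gt hu)]
    calc u * Real.exp (-u) * -Real.log u = (u * -Real.log u) * Real.exp (-u) := by ring
      _ ≤ 1 * 1 := by
          have hnn : 0 ≤ u * -Real.log u := by nlinarith
          exact mul_le_mul this he (Real.exp_pos _).le (by linarith)
      _ ≤ 6 := by norm_num
  · have hlog : 0 ≤ Real.log u := Real.log_nonneg h
    rw [abs_of_nonneg hlog]
    have h2 : Real.log u ≤ u := (Real.log_le_sub_one_of_pos hu).trans (by linarith)
    have h3 : u ^ 3 / 6 ≤ Real.exp u := cube_le_exp (by linarith)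
    have he : Real.exp (-u) ≤ 6 / u ^ 2 := by
      rw [Real.exp_neg, inv_le_iff_one_le_mul₀ (Real.exp_pos u)]
      rw [div_mul_eq_mul_div, le_div_iff₀ (by positivity), one_mul]
      nlinarith [Real.exp_pos u]
    calc u * Real.exp (-u) * Real.log u ≤ u * (6 / u ^ 2) * u := by
          have h4 : u * Real.exp (-u) ≤ u * (6 / u ^ 2) :=
            mul_le_mul_of_nonneg_left he hu.le
          exact mul_le_mul h4 h2 hlog (by positivity)
      _ = 6 := by field_simp
      _ ≤ 6 := le_refl _

theorem first_deriv_E_bound (T : ℝ) (hT : 0 < T) :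
    ∃ C > 0, ∀ l : ℝ, 0 < l → ∀ t ∈ Set.Ioc (0 : ℝ) T, ∀ s : ℝ, 0 < s →
      |deriv (fun s : ℝ => Real.exp (-(l ^ s * t))) s| ≤ C * s⁻¹ * (1 + |Real.log t|) := by
  refine ⟨6, by norm_num, ?_⟩
  intro l hl t ht s hs
  obtain ⟨ht0, htT⟩ := ht
  have hD : HasDerivAt (fun s : ℝ => Real.exp (-(l ^ s * t)))
      (Real.exp (-(l ^ s * t)) * (-(l ^ s * Real.log l * t))) s := by
    have h1 : HasDerivAt (fun s : ℝ => l ^ s) (l ^ s * Real.log l) s :=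
      (Real.hasStrictDerivAt_const_rpow hl s).hasDerivAt
    have h2 : HasDerivAt (fun s : ℝ => -(l ^ s * t)) (-(l ^ s * Real.log l * t)) s :=
      ((h1.mul_const t).neg)
    exact h2.exp
  rw [hD.deriv]
  set u : ℝ := l ^ s * t with hu_def
  have hu : 0 < u := mul_pos (Real.rpow_pos_of_pos hl s) ht0
  have hlogu : Real.log u = s * Real.log l + Real.log t := by
    rw [hu_def, Real.log_mul (by positivity) (ne_of_gt ht0), Real.log_rpow hl]
  have hll : Real.log l = (Real.log u - Real.log t) / s := by
    field_simp [hlogu]; rw [hlogu]; ring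
  have key : |Real.exp (-u) * -(l ^ s * Real.log l * t)|
      = Real.exp (-u) * (u * |Real.log u - Real.log t|) / s := by
    rw [abs_mul, abs_neg, Real.abs_exp, hll]
    rw [show l ^ s * ((Real.log u - Real.log t) / s) * t
        = u * (Real.log u - Real.log t) / s by rw [hu_def]; ring]
    rw [abs_div, abs_mul, abs_of_pos hu, abs_of_pos hs]
    ring
  rw [key]
  have hb : Real.exp (-u) * (u * |Real.log u - Real.log t|)
      ≤ 6 + 6 * |Real.log t| := by
    have h1 : |Real.log u - Real.log t| ≤ |Real.log u| + |Real.log t| :=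
      abs_sub (Real.log u) (Real.log t)
    calc Real.exp (-u) * (u * |Real.log u - Real.log t|)
        ≤ Real.exp (-u) * (u * (|Real.log u| + |Real.log t|)) := by
          apply mul_le_mul_of_nonneg_left _ (Real.exp_pos _).le
          exact mul_le_mul_of_nonneg_left h1 hu.le
      _ = u * Real.exp (-u) * |Real.log u| + (u * Real.exp (-u)) * |Real.log t| := by ring
      _ ≤ 6 + 1 * |Real.log t| := by
          gcongr
          · exact ue_log_le_six hu
          · exact ue_le_one hu
      _ ≤ 6 + 6 * |Real.log t| := by
          have := abs_nonneg (Real.log t); linarith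
  calc Real.exp (-u) * (u * |Real.log u - Real.log t|) / s
      ≤ (6 + 6 * |Real.log t|) / s := by
        gcongr
    _ = 6 * s⁻¹ * (1 + |Real.log t|) := by field_simp
end

section
/- There is a constant C > 0 such that for all λ > 0, all t ∈ (0, T], and all s > 0, the second derivative of s ↦ exp(-λ^s t) satisfies |d²/ds² exp(-λ^s t)| ≤ C s^{-2} (1 + |ln t|²). -/
open Real

lemma aux_xexp (x : ℝ) (hx : 0 ≤ x) : x * Real.exp (-x) ≤ 1 := by
  have h : x ≤ Real.exp x := by linarith [Real.add_one_le_exp x]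
  have h2 : x * Real.exp (-x) ≤ Real.exp x * Real.exp (-x) :=
    mul_le_mul_of_nonneg_right h (Real.exp_nonneg _)
  rwa [← Real.exp_add, add_neg_cancel, Real.exp_zero] at h2

lemma aux_xexp_c (c : ℝ) (hc : 0 < c) (x : ℝ) (hx : 0 ≤ x) :
    x * Real.exp (-(x / c)) ≤ c := by
  have := aux_xexp (x / c) (div_nonneg hx hc.le)
  calc x * Real.exp (-(x / c)) = c * (x / c * Real.exp (-(x / c))) := by
        field_simp
    _ ≤ c * 1 := by nlinarith [Real.exp_nonneg (-(x / c))]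
    _ = c := mul_one c

lemma aux_pow_exp (n : ℕ) (hn : 0 < n) (x : ℝ) (hx : 0 ≤ x) :
    x ^ n * Real.exp (-x) ≤ (n : ℝ) ^ n := by
  have hn' : (0 : ℝ) < n := Nat.cast_pos.mpr hn
  have key : x ^ n * Real.exp (-x) = (x * Real.exp (-(x / n))) ^ n := by
    rw [mul_pow, ← Real.exp_nat_mul]
    congr 1
    field_simp
  rw [key]
  have h1 : x * Real.exp (-(x / n)) ≤ (n : ℝ) := aux_xexp_c n hn' x hx
  have h0 : 0 ≤ x * Real.exp (-(x / n)) := mul_nonneg hx (Real.exp_nonneg _)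
  exact pow_le_pow_left₀ h0 h1 n

lemma aux_main_bound (x : ℝ) (hx : 0 < x) :
    (1 + Real.log x ^ 2) * ((x ^ 2 + x) * Real.exp (-x)) ≤ 288 := by
  rcases le_or_gt 1 x with h1 | h1
  · -- x ≥ 1
    have hlog : 0 ≤ Real.log x := Real.log_nonneg h1
    have hlx : Real.log x ≤ x := (Real.log_le_sub_one_of_pos hx).trans (by linarith)
    have hsq : Real.log x ^ 2 ≤ x ^ 2 := by nlinarith
    have e1 := aux_pow_exp 1 one_pos x hx.le
    have e2 := aux_pow_exp 2 two_pos x hx.le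
    have e3 := aux_pow_exp 3 (by norm_num) x hx.le
    have e4 := aux_pow_exp 4 (by norm_num) x hx.le
    simp only [pow_one] at e1
    norm_num at e1 e2 e3 e4
    have hexp : 0 ≤ Real.exp (-x) := Real.exp_nonneg _
    nlinarith [sq_nonneg x, mul_nonneg (mul_nonneg (sq_nonneg (Real.log x)) hx.le) hexp]
  · -- 0 < x < 1
    have hexp : Real.exp (-x) ≤ 1 := Real.exp_le_one_iff.mpr (by linarith)
    have hexp0 : 0 ≤ Real.exp (-x) := Real.exp_nonneg _
    have hlog : Real.log x ≤ 0 := Real.log_nonpos hx.le h1.le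
    have hy : 0 ≤ -Real.log x := by linarith
    have key : (-Real.log x) ^ 2 * Real.exp (-(-Real.log x)) ≤ 4 := by
      have := aux_pow_exp 2 two_pos (-Real.log x) hy
      norm_num at this ⊢
      linarith
    rw [neg_neg, Real.exp_log hx] at key
    have hx2 : x ^ 2 ≤ x := by nlinarith
    have hb : (1 + Real.log x ^ 2) * ((x ^ 2 + x) * Real.exp (-x))
        ≤ (1 + Real.log x ^ 2) * (2 * x) := by
      have : (x ^ 2 + x) * Real.exp (-x) ≤ 2 * x := by nlinarith
      exact mul_le_mul_of_nonneg_left this (by positivity)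
    have : (1 + Real.log x ^ 2) * (2 * x) ≤ 10 := by nlinarith
    linarith

lemma aux_hasDerivAt (l t : ℝ) (hl : 0 < l) (s : ℝ) :
    HasDerivAt (fun s : ℝ => Real.exp (-(l ^ s * t)))
      (Real.exp (-(l ^ s * t)) * (-(l ^ s * Real.log l * t))) s := by
  have h1 : HasDerivAt (fun x : ℝ => l ^ x) (l ^ s * Real.log l) s :=
    (Real.hasStrictDerivAt_const_rpow hl s).hasDerivAt
  have h2 : HasDerivAt (fun x : ℝ => -(l ^ x * t)) (-(l ^ s * Real.log l * t)) s :=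
    (h1.mul_const t).neg
  exact h2.exp

theorem second_deriv_E_bound (T : ℝ) (hT : 0 < T) :
    ∃ C > 0, ∀ l : ℝ, 0 < l → ∀ t ∈ Set.Ioc (0 : ℝ) T, ∀ s : ℝ, 0 < s →
      |iteratedDeriv 2 (fun s : ℝ => Real.exp (-(l ^ s * t))) s|
        ≤ C * s⁻¹ ^ 2 * (1 + |Real.log t| ^ 2) := by
  refine ⟨576, by norm_num, ?_⟩
  rintro l hl t ⟨ht, _⟩ s hs
  set x := l ^ s * t with hx_def
  have hls : (0 : ℝ) < l ^ s := Real.rpow_pos_of_pos hl s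
  have hx : 0 < x := mul_pos hls ht
  -- first derivative function
  have hderiv1 : deriv (fun s : ℝ => Real.exp (-(l ^ s * t)))
      = fun s : ℝ => Real.exp (-(l ^ s * t)) * (-(l ^ s * Real.log l * t)) := by
    funext u
    exact (aux_hasDerivAt l t hl u).deriv
  -- second derivative at s
  have h1 : HasDerivAt (fun x : ℝ => l ^ x) (l ^ s * Real.log l) s :=
    (Real.hasStrictDerivAt_const_rpow hl s).hasDerivAt
  have h2 : HasDerivAt (fun u : ℝ => -(l ^ u * Real.log l * t))
      (-(l ^ s * Real.log l * Real.log l * t)) s :=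
    ((h1.mul_const (Real.log l)).mul_const t).neg
  have hD2 : HasDerivAt (fun u : ℝ => Real.exp (-(l ^ u * t)) * (-(l ^ u * Real.log l * t)))
      (Real.exp (-(l ^ s * t)) * (-(l ^ s * Real.log l * t)) * (-(l ^ s * Real.log l * t))
        + Real.exp (-(l ^ s * t)) * (-(l ^ s * Real.log l * Real.log l * t))) s :=
    (aux_hasDerivAt l t hl s).mul h2
  have hval : iteratedDeriv 2 (fun s : ℝ => Real.exp (-(l ^ s * t))) s
      = Real.exp (-x) * (Real.log l ^ 2 * (x ^ 2 - x)) := by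
    rw [iteratedDeriv_succ, iteratedDeriv_one, hderiv1, hD2.deriv]
    ring
  rw [hval]
  have habs : |Real.exp (-x) * (Real.log l ^ 2 * (x ^ 2 - x))|
      = Real.log l ^ 2 * (x * |x - 1| * Real.exp (-x)) := by
    rw [abs_mul, abs_mul, Real.abs_exp, abs_of_nonneg (sq_nonneg _)]
    have : |x ^ 2 - x| = x * |x - 1| := by
      rw [show x ^ 2 - x = x * (x - 1) by ring, abs_mul, abs_of_pos hx]
    rw [this]; ring
  rw [habs]
  -- log l = (log x - log t) / s
  have hlogls : Real.log (l ^ s) = s * Real.log l := Real.log_rpow hl s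
  have hlogx : Real.log x = s * Real.log l + Real.log t := by
    rw [hx_def, Real.log_mul (ne_of_gt hls) (ne_of_gt ht), hlogls]
  have hll : Real.log l ^ 2 = (Real.log x - Real.log t) ^ 2 / s ^ 2 := by
    rw [hlogx]
    field_simp
    ring
  rw [hll]
  have hkey : (Real.log x - Real.log t) ^ 2 * (x * |x - 1| * Real.exp (-x))
      ≤ 576 * (1 + |Real.log t| ^ 2) := by
    have hG : x * |x - 1| * Real.exp (-x) ≤ (x ^ 2 + x) * Real.exp (-x) := by
      have h1 : |x - 1| ≤ x + 1 := by
        rw [abs_le]; constructor <;> nlinarith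
      have : x * |x - 1| ≤ x ^ 2 + x := by nlinarith [abs_nonneg (x - 1)]
      exact mul_le_mul_of_nonneg_right this (Real.exp_nonneg _)
    have hG0 : 0 ≤ x * |x - 1| * Real.exp (-x) := by positivity
    have hmain := aux_main_bound x hx
    have hsq : (Real.log x - Real.log t) ^ 2
        ≤ 2 * (1 + Real.log x ^ 2) * (1 + Real.log t ^ 2) := by
      nlinarith [sq_nonneg (Real.log x + Real.log t), sq_nonneg (Real.log x * Real.log t),
        sq_nonneg (Real.log x), sq_nonneg (Real.log t)]
    have habst : |Real.log t| ^ 2 = Real.log t ^ 2 := sq_abs _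
    rw [habst]
    have hlt : 0 ≤ 1 + Real.log t ^ 2 := by positivity
    calc (Real.log x - Real.log t) ^ 2 * (x * |x - 1| * Real.exp (-x))
        ≤ 2 * (1 + Real.log x ^ 2) * (1 + Real.log t ^ 2) * ((x ^ 2 + x) * Real.exp (-x)) := by
          apply mul_le_mul hsq hG hG0
          positivity
      _ = 2 * (1 + Real.log t ^ 2) * ((1 + Real.log x ^ 2) * ((x ^ 2 + x) * Real.exp (-x))) := by
          ring
      _ ≤ 2 * (1 + Real.log t ^ 2) * 288 := by
          apply mul_le_mul_of_nonneg_left hmain (by positivity)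
      _ = 576 * (1 + Real.log t ^ 2) := by ring
  have hs2 : (0 : ℝ) < s ^ 2 := by positivity
  calc (Real.log x - Real.log t) ^ 2 / s ^ 2 * (x * |x - 1| * Real.exp (-x))
      = (Real.log x - Real.log t) ^ 2 * (x * |x - 1| * Real.exp (-x)) / s ^ 2 := by ring
    _ ≤ 576 * (1 + |Real.log t| ^ 2) / s ^ 2 := by
        gcongr
    _ = 576 * s⁻¹ ^ 2 * (1 + |Real.log t| ^ 2) := by
        rw [div_eq_mul_inv, ← inv_pow]
        ring
end
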